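/- Let A be the symmetric adjacency matrix of a graph G on n vertices and B = J_m ⊗ A the adjacency matrix of the m-shadow graph D_m(G). Then for every copy index r ∈ {1,…,m} and every vertex index k, the (r,k)-diagonal entry of |B| equals the k-th diagonal entry of |A|; equivalently, the vertex energy of each vertex of D_m(G) equals the vertex energy of the corresponding vertex of G. -/

import Mathlib

open Kronecker

open Matrix

open scoped MatrixOrder

theorem stmt_10 (n m : ℕ) (hm : 1 ≤ m)
    (A : Matrix (Fin n) (Fin n) ℝ) (hA : A.IsSymm)
    (J : Matrix (Fin m) (Fin m) ℝ) (hJ : J = Matrix.of fun _ _ => (1 : ℝ))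
    (S : Matrix (Fin n) (Fin n) ℝ) (hS : S.PosSemidef) (hS2 : S ^ 2 = A ^ 2)
    (T : Matrix (Fin m × Fin n) (Fin m × Fin n) ℝ)
    (hT : T.PosSemidef) (hT2 : T ^ 2 = (J ⊗ₖ A) ^ 2) :
    ∀ (r : Fin m) (k : Fin n), T (r, k) (r, k) = S k k := by
  have hm0 : (0:ℝ) < (m:ℝ) := by exact_mod_cast hm
  have hJ2 : J * J = (m:ℝ) • J := by
    subst hJ
    ext i j
    simp [Matrix.mul_apply, Matrix.smul_apply]
  -- the candidate square root
  set R := CFC.sqrt S with hR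
  have hRR : R * R = S := CFC.sqrt_mul_sqrt_self S hS.nonneg
  have hRsym : Rᴴ = R := (CFC.sqrt_nonneg S).posSemidef.isHermitian
  have hJsym : Jᴴ = J := by subst hJ; ext i j; simp
  set M : Matrix (Fin m × Fin n) (Fin m × Fin n) ℝ :=
    ((Real.sqrt m)⁻¹ • J) ⊗ₖ R with hM
  have hRe : ∀ k l, R k l = R l k := by
    intro k l
    conv_lhs => rw [← hRsym]
    simp [Matrix.conjTranspose_apply]
  have hMsym : Mᴴ = M := by
    ext ⟨i, k⟩ ⟨j, l⟩
    simp [hM, hJ, Matrix.conjTranspose_apply, Matrix.kroneckerMap_apply, hRe l k]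
  have hMM : M * M = J ⊗ₖ S := by
    rw [hM, ← Matrix.mul_kronecker_mul, hRR, Matrix.smul_mul, Matrix.mul_smul, hJ2,
      smul_smul, smul_smul]
    have : (Real.sqrt m)⁻¹ * (Real.sqrt m)⁻¹ * (m:ℝ) = 1 := by
      rw [← mul_inv, Real.mul_self_sqrt hm0.le]
      field_simp
    rw [this, one_smul]
  have hPSD : (J ⊗ₖ S).PosSemidef := by
    have := Matrix.posSemidef_conjTranspose_mul_self M
    rwa [hMsym, hMM] at this
  have hS2' : S * S = A * A := by rw [← pow_two, ← pow_two, hS2]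
  have hsq : (J ⊗ₖ S) ^ 2 = (J ⊗ₖ A) ^ 2 := by
    rw [pow_two, pow_two, ← Matrix.mul_kronecker_mul, ← Matrix.mul_kronecker_mul, hS2']
  have hTJS : T = J ⊗ₖ S := (CFC.sq_eq_sq_iff T (J ⊗ₖ S) hT.nonneg hPSD.nonneg).1 (by rw [hT2, hsq])
  intro r k
  rw [hTJS]
  simp [Matrix.kroneckerMap_apply, hJ]
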